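/- For all real d×d matrices A, B and every real s ≥ 0, the singular value function satisfies φ^s(AB) ≤ φ^s(A)·φ^s(B). -/

import Mathlib

open scoped BigOperators

/-- `sval A k` : the (k+1)-st largest singular value of `A`, i.e. the square roots of the
eigenvalues of `Aᵀ * A` listed in decreasing order (0-indexed). -/
noncomputable def sval {d : ℕ} (A : Matrix (Fin d) (Fin d) ℝ) (k : Fin d) : ℝ :=
  (fun i => Real.sqrt ((Matrix.isHermitian_iff_isSymm.2 (Matrix.isSymm_transpose_mul_self A)).eigenvalues i))
    (Tuple.sort (fun i => Real.sqrt ((Matrix.isHermitian_iff_isSymm.2 (Matrix.isSymm_transpose_mul_self A)).eigenvalues i)) k.rev)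

/-- `svalNat A k` : the k-th singular value with 0-based natural index, 0 out of range. -/
noncomputable def svalNat {d : ℕ} (A : Matrix (Fin d) (Fin d) ℝ) (k : ℕ) : ℝ :=
  if h : k < d then sval A ⟨k, h⟩ else 0

/-- The singular value function φ^s: for 0 ≤ s ≤ d it is α_1(A)⋯α_{⌊s⌋}(A)·α_{⌈s⌉}(A)^{s-⌊s⌋},
and |det A|^{s/d} for s ≥ d. -/
noncomputable def phi {d : ℕ} (s : ℝ) (A : Matrix (Fin d) (Fin d) ℝ) : ℝ :=
  if s ≤ d then
    (∏ i ∈ Finset.range ⌊s⌋₊, svalNat A i) * (svalNat A (⌈s⌉₊ - 1)) ^ (s - (⌊s⌋₊ : ℝ))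
  else |A.det| ^ (s / (d : ℝ))

/-- The ℓ² (Euclidean) operator norm of a matrix. -/
noncomputable def opNorm {n : Type*} [Fintype n] [DecidableEq n] (A : Matrix n n ℝ) : ℝ :=
  ‖(Matrix.toEuclideanLin A).toContinuousLinearMap‖

/-- The k-th compound matrix of `A`: the matrix of the k-th exterior power `A^{∧k}` in the
orthonormal basis `e_{i₁} ∧ ⋯ ∧ e_{i_k}` (i₁ < ⋯ < i_k) of `∧^k ℝ^d` with the induced inner
product. Rows/columns are indexed by k-element subsets of `Fin d`. -/
noncomputable def compound {d : ℕ} (A : Matrix (Fin d) (Fin d) ℝ) (k : ℕ) :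
    Matrix {s : Finset (Fin d) // s.card = k} {s : Finset (Fin d) // s.card = k} ℝ :=
  fun S T => (Matrix.of fun i j : Fin k =>
    A ((S.1.orderIsoOfFin S.2 i : Fin d)) ((T.1.orderIsoOfFin T.2 j : Fin d))).det

/-! ### Auxiliary material -/

section CauchyBinet

open Matrix Finset

variable {R : Type*} [CommRing R]

theorem PhiAux.det_mul_expand {k d : ℕ} (A : Matrix (Fin k) (Fin d) R)
    (B : Matrix (Fin d) (Fin k) R) :
    (A * B).det = ∑ f : Fin k → Fin d, (∏ i, A i (f i)) * (B.submatrix f id).det := by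
  classical
  calc (A * B).det
      = Matrix.detRowAlternating (fun i : Fin k => ∑ j, A i j • B j) := by
        congr 1; ext i t; simp [Matrix.mul_apply]
    _ = ∑ f : Fin k → Fin d, Matrix.detRowAlternating (fun i => A i (f i) • B (f i)) :=
        (Matrix.detRowAlternating (R := R) (n := Fin k)).toMultilinearMap.map_sum
          (g := fun i j => A i j • B j)
    _ = ∑ f : Fin k → Fin d, (∏ i, A i (f i)) * (B.submatrix f id).det := by
        refine Finset.sum_congr rfl fun f _ => ?_
        rw [show Matrix.detRowAlternating (fun i : Fin k => A i (f i) • B (f i))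
              = (Matrix.detRowAlternating (R := R) (n := Fin k)).toMultilinearMap
                  (fun i => A i (f i) • ((B.submatrix f id) : Matrix (Fin k) (Fin k) R) i) from rfl]
        exact (MultilinearMap.map_smul_univ _ _ _).trans rfl

theorem PhiAux.injOn_bij {k d : ℕ} :
    Function.Bijective (fun p : {s : Finset (Fin d) // s.card = k} × Equiv.Perm (Fin k) =>
      (⟨fun i => p.1.1.orderEmbOfFin p.1.2 (p.2 i),
        (p.1.1.orderEmbOfFin p.1.2).injective.comp p.2.injective⟩ :
        {f : Fin k → Fin d // Function.Injective f})) := by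
  classical
  constructor
  · rintro ⟨⟨S, hS⟩, σ⟩ ⟨⟨T, hT⟩, τ⟩ h
    have h' : (fun i => S.orderEmbOfFin hS (σ i)) = (fun i => T.orderEmbOfFin hT (τ i)) :=
      congrArg Subtype.val h
    have hST : S = T := by
      apply Finset.coe_injective
      rw [← Finset.range_orderEmbOfFin S hS, ← Finset.range_orderEmbOfFin T hT]
      have : Set.range (fun i => S.orderEmbOfFin hS (σ i))
          = Set.range (fun i => T.orderEmbOfFin hT (τ i)) := by rw [h']
      rwa [show (fun i => S.orderEmbOfFin hS (σ i)) = (⇑(S.orderEmbOfFin hS)) ∘ ⇑σ from rfl,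
        show (fun i => T.orderEmbOfFin hT (τ i)) = (⇑(T.orderEmbOfFin hT)) ∘ ⇑τ from rfl,
        σ.surjective.range_comp, τ.surjective.range_comp] at this
    subst hST
    have hστ : σ = τ := by
      ext i
      exact congrArg Fin.val ((S.orderEmbOfFin hS).injective (congrFun h' i))
    simp [hστ]
  · rintro ⟨f, hf⟩
    set S : Finset (Fin d) := Finset.image f Finset.univ with hSdef
    have hS : S.card = k := by
      rw [hSdef, Finset.card_image_of_injective _ hf, Finset.card_univ, Fintype.card_fin]
    have hmem : ∀ i, f i ∈ S := fun i => Finset.mem_image_of_mem f (Finset.mem_univ i)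
    have hginj : Function.Injective
        (fun i => (S.orderIsoOfFin hS).symm ⟨f i, hmem i⟩) := by
      intro a b hab
      exact hf (congrArg Subtype.val ((S.orderIsoOfFin hS).symm.injective.eq_iff.mp hab))
    refine ⟨⟨⟨S, hS⟩, Equiv.ofBijective _ ((Finite.injective_iff_bijective).mp hginj)⟩, ?_⟩
    apply Subtype.ext
    funext i
    show S.orderEmbOfFin hS ((S.orderIsoOfFin hS).symm ⟨f i, hmem i⟩) = f i
    rw [← Finset.coe_orderIsoOfFin_apply, OrderIso.apply_symm_apply]

/-- **Cauchy–Binet formula** for a product of rectangular matrices. -/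
theorem PhiAux.cauchy_binet {k d : ℕ} (A : Matrix (Fin k) (Fin d) R)
    (B : Matrix (Fin d) (Fin k) R) :
    (A * B).det = ∑ S : {s : Finset (Fin d) // s.card = k},
      (A.submatrix id (S.1.orderEmbOfFin S.2)).det * (B.submatrix (S.1.orderEmbOfFin S.2) id).det := by
  classical
  rw [PhiAux.det_mul_expand]
  have hzero : ∀ f : Fin k → Fin d, ¬ Function.Injective f →
      (∏ i, A i (f i)) * (B.submatrix f id).det = 0 := by
    intro f hf
    rw [Function.not_injective_iff] at hf
    obtain ⟨a, b, hab, hne⟩ := hf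
    rw [Matrix.det_zero_of_row_eq hne (by funext t; simp [Matrix.submatrix_apply, hab])]
    ring
  have hfilter : ∑ f : Fin k → Fin d, (∏ i, A i (f i)) * (B.submatrix f id).det
      = ∑ f ∈ Finset.univ.filter (fun f : Fin k → Fin d => Function.Injective f),
          (∏ i, A i (f i)) * (B.submatrix f id).det :=
    (Finset.sum_filter_of_ne (by intro f _ h; by_contra hinj; exact h (hzero f hinj))).symm
  rw [hfilter,
    Finset.sum_subtype (p := fun f : Fin k → Fin d => Function.Injective f)
      (Finset.univ.filter (fun f : Fin k → Fin d => Function.Injective f))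
      (by simp) (fun f => (∏ i, A i (f i)) * (B.submatrix f id).det),
    ← Fintype.sum_bijective _ PhiAux.injOn_bij _
      (fun f : {f : Fin k → Fin d // Function.Injective f} =>
        (∏ i, A i (f.1 i)) * (B.submatrix f.1 id).det) (fun p => rfl),
    Fintype.sum_prod_type]
  refine Finset.sum_congr rfl fun S _ => ?_
  have hperm : ∀ σ : Equiv.Perm (Fin k),
      (B.submatrix (fun i => S.1.orderEmbOfFin S.2 (σ i)) id).det
        = (Equiv.Perm.sign σ : ℤ) * (B.submatrix (S.1.orderEmbOfFin S.2) id).det := by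
    intro σ
    rw [show (B.submatrix (fun i => S.1.orderEmbOfFin S.2 (σ i)) id)
        = (B.submatrix (S.1.orderEmbOfFin S.2) id).submatrix σ id from rfl]
    rw [Matrix.det_permute]
  calc ∑ σ : Equiv.Perm (Fin k),
        (∏ i, A i (S.1.orderEmbOfFin S.2 (σ i)))
          * (B.submatrix (fun i => S.1.orderEmbOfFin S.2 (σ i)) id).det
      = (∑ σ : Equiv.Perm (Fin k), (Equiv.Perm.sign σ : ℤ)
          * ∏ i, A i (S.1.orderEmbOfFin S.2 (σ i)))
          * (B.submatrix (S.1.orderEmbOfFin S.2) id).det := by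
        rw [Finset.sum_mul]
        refine Finset.sum_congr rfl fun σ _ => ?_
        rw [hperm σ]; ring
    _ = (A.submatrix id (S.1.orderEmbOfFin S.2)).det
          * (B.submatrix (S.1.orderEmbOfFin S.2) id).det := by
        congr 1
        rw [← Matrix.det_transpose, Matrix.det_apply']
        rfl

end CauchyBinet

section CompoundLemmas

open Matrix Finset

namespace PhiAux

variable {d : ℕ}

theorem compound_apply (A : Matrix (Fin d) (Fin d) ℝ) (k : ℕ)
    (S T : {s : Finset (Fin d) // s.card = k}) :
    compound A k S T = (A.submatrix (S.1.orderEmbOfFin S.2) (T.1.orderEmbOfFin T.2)).det := by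
  unfold compound
  congr 1

theorem compound_mul (A B : Matrix (Fin d) (Fin d) ℝ) (k : ℕ) :
    compound (A * B) k = compound A k * compound B k := by
  classical
  ext S T
  rw [compound_apply, Matrix.mul_apply]
  have h : (A * B).submatrix (S.1.orderEmbOfFin S.2) (T.1.orderEmbOfFin T.2)
      = (A.submatrix (S.1.orderEmbOfFin S.2) id) * (B.submatrix id (T.1.orderEmbOfFin T.2)) := by
    ext i j; simp [Matrix.mul_apply]
  rw [h, PhiAux.cauchy_binet]
  refine Finset.sum_congr rfl fun U _ => ?_
  rw [compound_apply, compound_apply]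
  rfl

theorem compound_conjTranspose (A : Matrix (Fin d) (Fin d) ℝ) (k : ℕ) :
    compound Aᴴ k = (compound A k)ᴴ := by
  ext S T
  rw [Matrix.conjTranspose_apply, compound_apply, compound_apply, star_trivial,
    show Aᴴ.submatrix (S.1.orderEmbOfFin S.2) (T.1.orderEmbOfFin T.2)
      = ((A.submatrix (T.1.orderEmbOfFin T.2) (S.1.orderEmbOfFin S.2))ᵀ : Matrix (Fin k) (Fin k) ℝ)
      from by ext i j; simp [Matrix.conjTranspose_apply, star_trivial],
    Matrix.det_transpose]

theorem subtype_val_image (S : Finset (Fin d)) {k : ℕ} (hS : S.card = k) :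
    Finset.image (S.orderEmbOfFin hS) Finset.univ = S := by
  apply Finset.coe_injective
  rw [Finset.coe_image, Finset.coe_univ, Set.image_univ, Finset.range_orderEmbOfFin]

theorem compound_diagonal (f : Fin d → ℝ) (k : ℕ) :
    compound (Matrix.diagonal f) k
      = Matrix.diagonal (fun S : {s : Finset (Fin d) // s.card = k} => ∏ x ∈ S.1, f x) := by
  classical
  ext S T
  rw [compound_apply]
  by_cases hST : S = T
  · subst hST
    rw [Matrix.diagonal_apply_eq]
    have h : (Matrix.diagonal f).submatrix (S.1.orderEmbOfFin S.2) (S.1.orderEmbOfFin S.2)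
        = Matrix.diagonal (fun i => f (S.1.orderEmbOfFin S.2 i)) := by
      ext i j
      by_cases hij : i = j
      · subst hij; simp
      · rw [Matrix.submatrix_apply, Matrix.diagonal_apply_ne, Matrix.diagonal_apply_ne _ hij]
        exact fun h => hij ((S.1.orderEmbOfFin S.2).injective h)
    rw [h, Matrix.det_diagonal]
    conv_rhs => rw [← subtype_val_image S.1 S.2]
    rw [Finset.prod_image (fun a _ b _ hab => (S.1.orderEmbOfFin S.2).injective hab)]
  · rw [Matrix.diagonal_apply_ne _ hST]
    have hx : ∃ x ∈ S.1, x ∉ T.1 := by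
      by_contra hcon
      push_neg at hcon
      exact hST (Subtype.ext (Finset.eq_of_subset_of_card_le hcon (by rw [S.2, T.2])))
    obtain ⟨x, hxS, hxT⟩ := hx
    obtain ⟨i, hi⟩ : ∃ i, S.1.orderEmbOfFin S.2 i = x := by
      have hr : x ∈ Set.range (S.1.orderEmbOfFin S.2) := by
        rw [Finset.range_orderEmbOfFin]; exact_mod_cast hxS
      exact hr
    apply Matrix.det_eq_zero_of_row_eq_zero i
    intro j
    rw [Matrix.submatrix_apply, Matrix.diagonal_apply_ne]
    intro hcon
    exact hxT (hi ▸ hcon ▸ Finset.orderEmbOfFin_mem T.1 T.2 j)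

theorem compound_one (k : ℕ) : compound (1 : Matrix (Fin d) (Fin d) ℝ) k = 1 := by
  classical
  rw [← Matrix.diagonal_one, compound_diagonal]
  simp

end PhiAux

end CompoundLemmas

section NormLemmas

open Matrix
open scoped Matrix.Norms.L2Operator

namespace PhiAux

variable {n : Type*} [Fintype n] [DecidableEq n]

theorem l2_norm_one_le : ‖(1 : Matrix n n ℝ)‖ ≤ 1 := by
  rw [Matrix.l2_opNorm_def]
  apply ContinuousLinearMap.opNorm_le_bound _ zero_le_one
  intro x
  rw [one_mul]
  have h : (Matrix.toEuclideanLin (1 : Matrix n n ℝ)) x = x := by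
    rw [Matrix.toEuclideanLin_apply, Matrix.one_mulVec]
  show ‖(Matrix.toEuclideanLin (1 : Matrix n n ℝ)) x‖ ≤ ‖x‖
  rw [h]

theorem l2_norm_diagonal_le (μ : n → ℝ) {c : ℝ} (hc : 0 ≤ c) (h : ∀ i, |μ i| ≤ c) :
    ‖Matrix.diagonal μ‖ ≤ c := by
  rw [Matrix.l2_opNorm_def]
  apply ContinuousLinearMap.opNorm_le_bound _ hc
  intro x
  show ‖(Matrix.toEuclideanLin (Matrix.diagonal μ)) x‖ ≤ c * ‖x‖
  rw [EuclideanSpace.norm_eq, EuclideanSpace.norm_eq]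
  have hx : ∀ i, ‖(Matrix.toEuclideanLin (Matrix.diagonal μ) x) i‖ = |μ i| * ‖x i‖ := by
    intro i
    rw [Matrix.toEuclideanLin_apply, PiLp.toLp_apply, Matrix.mulVec_diagonal]
    rw [Real.norm_eq_abs, Real.norm_eq_abs, abs_mul]
  rw [← Real.sqrt_sq hc, ← Real.sqrt_mul (sq_nonneg c)]
  apply Real.sqrt_le_sqrt
  rw [Finset.mul_sum]
  apply Finset.sum_le_sum
  intro i _
  rw [hx i, mul_pow]
  exact mul_le_mul_of_nonneg_right (pow_le_pow_left₀ (abs_nonneg _) (h i) 2) (sq_nonneg _)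

theorem abs_le_l2_norm_diagonal (μ : n → ℝ) (i : n) : |μ i| ≤ ‖Matrix.diagonal μ‖ := by
  have h := Matrix.l2_opNorm_mulVec (Matrix.diagonal μ) (EuclideanSpace.single i (1 : ℝ))
  rw [EuclideanSpace.norm_single, norm_one, mul_one] at h
  have hv : (Matrix.diagonal μ) *ᵥ ((WithLp.equiv 2 (n → ℝ)) (EuclideanSpace.single i (1 : ℝ)))
      = (Pi.single i (μ i) : n → ℝ) := by
    funext j
    rw [Matrix.mulVec_diagonal]
    by_cases hji : j = i
    · subst hji; simp [EuclideanSpace.single_apply, Pi.single_apply]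
    · simp [EuclideanSpace.single_apply, Pi.single_apply, hji]
  have hv2 : ‖(EuclideanSpace.equiv n ℝ).symm ((Matrix.diagonal μ) *ᵥ
      (WithLp.equiv 2 (n → ℝ)) (EuclideanSpace.single i (1 : ℝ)))‖ = |μ i| := by
    rw [show (Matrix.diagonal μ) *ᵥ ((WithLp.equiv 2 (n → ℝ)) (EuclideanSpace.single i (1:ℝ)))
        = (Pi.single i (μ i) : n → ℝ) from hv]
    rw [show (EuclideanSpace.equiv n ℝ).symm (Pi.single i (μ i) : n → ℝ)
        = EuclideanSpace.single i (μ i) from rfl]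
    rw [EuclideanSpace.norm_single, Real.norm_eq_abs]
  rw [← hv2]
  exact h

theorem l2_norm_unitary (U X V : Matrix n n ℝ) (hU : U * Uᴴ = 1) (hV : Vᴴ * V = 1) :
    ‖U * X * V‖ = ‖X‖ := by
  have hU' : Uᴴ * U = 1 := mul_eq_one_comm.mp hU
  have hV' : V * Vᴴ = 1 := mul_eq_one_comm.mp hV
  have hone : ‖(1 : Matrix n n ℝ)‖ ≤ 1 := l2_norm_one_le
  have hnU : ‖U‖ ≤ 1 := by
    have h2 : ‖U‖ * ‖U‖ = ‖(1 : Matrix n n ℝ)‖ := by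
      rw [← hU']; exact (Matrix.l2_opNorm_conjTranspose_mul_self U).symm
    nlinarith [norm_nonneg U]
  have hnV : ‖V‖ ≤ 1 := by
    have h2 : ‖V‖ * ‖V‖ = ‖(1 : Matrix n n ℝ)‖ := by
      rw [← hV]; exact (Matrix.l2_opNorm_conjTranspose_mul_self V).symm
    nlinarith [norm_nonneg V]
  have hnU' : ‖Uᴴ‖ ≤ 1 := by rw [Matrix.l2_opNorm_conjTranspose]; exact hnU
  have hnV' : ‖Vᴴ‖ ≤ 1 := by rw [Matrix.l2_opNorm_conjTranspose]; exact hnV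
  have hle : ∀ (W Y Z : Matrix n n ℝ), ‖W‖ ≤ 1 → ‖Z‖ ≤ 1 → ‖W * Y * Z‖ ≤ ‖Y‖ := by
    intro W Y Z hW hZ
    calc ‖W * Y * Z‖ ≤ ‖W * Y‖ * ‖Z‖ := Matrix.l2_opNorm_mul _ _
      _ ≤ (‖W‖ * ‖Y‖) * ‖Z‖ := by
          have := Matrix.l2_opNorm_mul W Y
          nlinarith [norm_nonneg Z, norm_nonneg (W * Y)]
      _ ≤ (‖W‖ * ‖Y‖) * 1 := mul_le_mul_of_nonneg_left hZ
            (mul_nonneg (norm_nonneg W) (norm_nonneg Y))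
      _ ≤ 1 * ‖Y‖ * 1 := by
          have := mul_le_mul_of_nonneg_right hW (norm_nonneg Y)
          nlinarith
      _ = ‖Y‖ := by ring
  refine le_antisymm (hle _ _ _ hnU hnV) ?_
  have hX : Uᴴ * (U * X * V) * Vᴴ = X := by
    calc Uᴴ * (U * X * V) * Vᴴ = (Uᴴ * U) * X * (V * Vᴴ) := by
          simp only [Matrix.mul_assoc]
      _ = X := by rw [hU', hV']; simp
  calc ‖X‖ = ‖Uᴴ * (U * X * V) * Vᴴ‖ := by rw [hX]
    _ ≤ ‖U * X * V‖ := hle _ _ _ hnU' hnV'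

end PhiAux

end NormLemmas

section Sorted

namespace PhiAux

theorem strictMono_le_apply {k d : ℕ} {t : Fin k → Fin d} (ht : StrictMono t) (i : Fin k) :
    (i : ℕ) ≤ (t i : ℕ) := by
  have key : ∀ m : ℕ, ∀ hm : m < k, m ≤ (t ⟨m, hm⟩ : ℕ) := by
    intro m
    induction m with
    | zero => intro hm; exact Nat.zero_le _
    | succ p ih =>
      intro hm
      have hp : p < k := Nat.lt_of_succ_lt hm
      have h1 := ih hp
      have h3 : (t ⟨p, hp⟩ : ℕ) < (t ⟨p + 1, hm⟩ : ℕ) := ht (by simp [Fin.lt_def])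
      omega
  exact key i.1 i.2

theorem strictMono_apply_le {k d : ℕ} (hk : k ≤ d) {t : Fin k → Fin d} (ht : StrictMono t)
    (i : Fin k) : (t i : ℕ) ≤ d - k + i := by
  have h1 : StrictMono (fun j : Fin k => (t j.rev).rev) := by
    intro a b hab
    exact Fin.rev_lt_rev.mpr (ht (Fin.rev_lt_rev.mpr hab))
  have h2 := strictMono_le_apply h1 i.rev
  rw [Fin.rev_rev] at h2
  have h3 := Fin.val_rev (t i)
  have h4 := Fin.val_rev i
  rw [h3, h4] at h2
  have h5 : (t i : ℕ) < d := (t i).isLt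
  have h6 : (i : ℕ) < k := i.isLt
  omega

theorem prod_top_le {d k : ℕ} (hk : k ≤ d) (g : Fin d → ℝ) (hg : Monotone g)
    (hg0 : ∀ i, 0 ≤ g i) (S : Finset (Fin d)) (hS : S.card = k) :
    ∏ x ∈ S, g x ≤ ∏ i : Fin k, g (Fin.rev (Fin.castLE hk i)) := by
  classical
  conv_lhs => rw [← PhiAux.subtype_val_image S hS]
  rw [Finset.prod_image (fun a _ b _ hab => (S.orderEmbOfFin hS).injective hab)]
  have hval : ∀ i : Fin k, (Fin.rev (Fin.castLE hk i.rev) : ℕ) = d - k + i := by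
    intro i
    have h6 : (i : ℕ) < k := i.isLt
    have h1 := Fin.val_rev (Fin.castLE hk i.rev)
    have h2 := Fin.val_rev i
    rw [Fin.coe_castLE] at h1
    omega
  have hle : ∏ i : Fin k, g (S.orderEmbOfFin hS i)
      ≤ ∏ i : Fin k, g (Fin.rev (Fin.castLE hk i.rev)) := by
    apply Finset.prod_le_prod (fun i _ => hg0 _)
    intro i _
    apply hg
    have := strictMono_apply_le hk (S.orderEmbOfFin hS).strictMono i
    rw [Fin.le_def, hval i]
    exact this
  refine hle.trans (le_of_eq ?_)
  exact Fintype.prod_equiv Fin.revPerm _ _ (fun i => rfl)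

end PhiAux

end Sorted

section Spectral

open Matrix
open scoped Matrix.Norms.L2Operator

namespace PhiAux

variable {d : ℕ}

/-- The increasingly sorted singular values. -/
noncomputable def gfun (A : Matrix (Fin d) (Fin d) ℝ) : Fin d → ℝ :=
  (fun i => Real.sqrt ((Matrix.isHermitian_iff_isSymm.2 (Matrix.isSymm_transpose_mul_self A)).eigenvalues i))
    ∘ Tuple.sort (fun i => Real.sqrt ((Matrix.isHermitian_iff_isSymm.2 (Matrix.isSymm_transpose_mul_self A)).eigenvalues i))

theorem sval_eq_gfun (A : Matrix (Fin d) (Fin d) ℝ) (k : Fin d) : sval A k = gfun A k.rev := rfl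

theorem gfun_monotone (A : Matrix (Fin d) (Fin d) ℝ) : Monotone (gfun A) :=
  Tuple.monotone_sort _

theorem gfun_nonneg (A : Matrix (Fin d) (Fin d) ℝ) (i : Fin d) : 0 ≤ gfun A i :=
  Real.sqrt_nonneg _

theorem svalNat_nonneg (A : Matrix (Fin d) (Fin d) ℝ) (k : ℕ) : 0 ≤ svalNat A k := by
  unfold svalNat
  split
  · exact Real.sqrt_nonneg _
  · exact le_rfl

theorem prodSval_nonneg (A : Matrix (Fin d) (Fin d) ℝ) (k : ℕ) :
    0 ≤ ∏ i ∈ Finset.range k, svalNat A i :=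
  Finset.prod_nonneg fun i _ => svalNat_nonneg A i

theorem prodSval_eq (A : Matrix (Fin d) (Fin d) ℝ) {k : ℕ} (hk : k ≤ d) :
    ∏ i ∈ Finset.range k, svalNat A i = ∏ i : Fin k, gfun A (Fin.rev (Fin.castLE hk i)) := by
  rw [← Fin.prod_univ_eq_prod_range]
  refine Finset.prod_congr rfl fun i _ => ?_
  have hi : (i : ℕ) < d := lt_of_lt_of_le i.isLt hk
  rw [show svalNat A (i : ℕ) = sval A ⟨i, hi⟩ from dif_pos hi, sval_eq_gfun]
  rfl

set_option maxHeartbeats 1000000 in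
/-- `‖compound A k‖` equals the product of the `k` largest singular values. -/
theorem norm_compound (A : Matrix (Fin d) (Fin d) ℝ) {k : ℕ} (hk : k ≤ d) :
    ‖compound A k‖ = ∏ i ∈ Finset.range k, svalNat A i := by
  classical
  set lam : Fin d → ℝ := (Matrix.isHermitian_iff_isSymm.2 (Matrix.isSymm_transpose_mul_self A)).eigenvalues with hlam
  have hlam0 : ∀ i, 0 ≤ lam i := fun i =>
    Matrix.eigenvalues_conjTranspose_mul_self_nonneg A i
  set mu : Fin d → ℝ := fun i => Real.sqrt (lam i) with hmu
  set σ : Equiv.Perm (Fin d) := Tuple.sort mu with hσ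
  have hgfun : gfun A = mu ∘ σ := rfl
  have hmusq : ∀ i, lam i = mu i * mu i := fun i => (Real.mul_self_sqrt (hlam0 i)).symm
  set P : ℝ := ∏ i ∈ Finset.range k, svalNat A i with hP
  have hP0 : 0 ≤ P := prodSval_nonneg A k
  have hPg : P = ∏ i : Fin k, gfun A (Fin.rev (Fin.castLE hk i)) := prodSval_eq A hk
  -- the eigenvector unitary
  set V : Matrix (Fin d) (Fin d) ℝ :=
    ((Matrix.isHermitian_iff_isSymm.2 (Matrix.isSymm_transpose_mul_self A)).eigenvectorUnitary : Matrix (Fin d) (Fin d) ℝ)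
    with hV
  have hVunit : V * Vᴴ = 1 := by
    rw [← Matrix.star_eq_conjTranspose]
    exact (Matrix.mem_unitaryGroup_iff).mp
      ((Matrix.isHermitian_iff_isSymm.2 (Matrix.isSymm_transpose_mul_self A)).eigenvectorUnitary).2
  have hspec : Aᴴ * A = V * Matrix.diagonal lam * Vᴴ := by
    have h := (Matrix.isHermitian_iff_isSymm.2 (Matrix.isSymm_transpose_mul_self A)).spectral_theorem
    rw [RCLike.ofReal_real_eq_id] at h
    rw [← Matrix.star_eq_conjTranspose]
    exact h
  -- compound of the unitary is unitary
  have hCVunit : compound V k * (compound V k)ᴴ = 1 := by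
    rw [← compound_conjTranspose, ← compound_mul, hVunit, compound_one]
  have hCVunit' : ((compound V k)ᴴ)ᴴ * (compound V k)ᴴ = 1 := by
    rw [Matrix.conjTranspose_conjTranspose]
    exact hCVunit
  -- ‖compound A k‖² = ‖compound (Aᴴ * A) k‖ = ‖diagonal π‖
  have hsq : ‖compound A k‖ * ‖compound A k‖
      = ‖Matrix.diagonal (fun S : {s : Finset (Fin d) // s.card = k} => ∏ x ∈ S.1, lam x)‖ := by
    rw [← Matrix.l2_opNorm_conjTranspose_mul_self, ← compound_conjTranspose, ← compound_mul,
      hspec, compound_mul, compound_mul, compound_conjTranspose, compound_diagonal,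
      l2_norm_unitary _ _ _ hCVunit hCVunit']
  -- upper bound for each subset product
  have hub : ∀ S : {s : Finset (Fin d) // s.card = k}, ∏ x ∈ S.1, mu x ≤ P := by
    intro S
    have himg : (S.1.image σ.symm).card = k := by
      rw [Finset.card_image_of_injective _ σ.symm.injective, S.2]
    have h1 : ∏ x ∈ S.1, mu x = ∏ x ∈ S.1.image σ.symm, gfun A x := by
      rw [Finset.prod_image (fun a _ b _ hab => σ.symm.injective hab)]
      refine Finset.prod_congr rfl fun x _ => ?_
      rw [hgfun]
      show mu x = mu (σ (σ.symm x))
      rw [Equiv.apply_symm_apply]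
    rw [h1, hPg]
    exact prod_top_le hk (gfun A) (gfun_monotone A) (gfun_nonneg A) _ himg
  have hmuP : ∀ S : {s : Finset (Fin d) // s.card = k}, 0 ≤ ∏ x ∈ S.1, mu x :=
    fun S => Finset.prod_nonneg fun x _ => Real.sqrt_nonneg _
  have hlamprod : ∀ S : {s : Finset (Fin d) // s.card = k},
      ∏ x ∈ S.1, lam x = (∏ x ∈ S.1, mu x) * (∏ x ∈ S.1, mu x) := by
    intro S
    rw [← Finset.prod_mul_distrib]
    exact Finset.prod_congr rfl fun x _ => hmusq x
  -- the subset realizing the maximum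
  have hex : ∃ S : {s : Finset (Fin d) // s.card = k}, ∏ x ∈ S.1, mu x = P := by
    refine ⟨⟨Finset.image (fun i : Fin k => σ (Fin.rev (Fin.castLE hk i))) Finset.univ, ?_⟩, ?_⟩
    · rw [Finset.card_image_of_injective, Finset.card_univ, Fintype.card_fin]
      intro a b hab
      have h1 := σ.injective hab
      exact Fin.castLE_injective hk (Fin.rev_injective h1)
    · rw [Finset.prod_image (fun a _ b _ hab =>
        Fin.castLE_injective hk (Fin.rev_injective (σ.injective hab)))]
      rw [hPg]
      rfl
  -- combine
  have hboundup : ‖Matrix.diagonal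
      (fun S : {s : Finset (Fin d) // s.card = k} => ∏ x ∈ S.1, lam x)‖ ≤ P * P := by
    apply l2_norm_diagonal_le _ (mul_nonneg hP0 hP0)
    intro S
    rw [hlamprod S, abs_of_nonneg (mul_nonneg (hmuP S) (hmuP S))]
    exact mul_le_mul (hub S) (hub S) (hmuP S) hP0
  have hbounddown : P * P ≤ ‖Matrix.diagonal
      (fun S : {s : Finset (Fin d) // s.card = k} => ∏ x ∈ S.1, lam x)‖ := by
    obtain ⟨S, hS⟩ := hex
    have h := abs_le_l2_norm_diagonal
      (fun S : {s : Finset (Fin d) // s.card = k} => ∏ x ∈ S.1, lam x) S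
    rw [hlamprod S, hS, abs_of_nonneg (mul_nonneg hP0 hP0)] at h
    exact h
  have hPP : ‖compound A k‖ * ‖compound A k‖ = P * P := by
    rw [hsq]
    exact le_antisymm hboundup hbounddown
  calc ‖compound A k‖ = Real.sqrt (‖compound A k‖ * ‖compound A k‖) :=
        (Real.sqrt_mul_self (norm_nonneg _)).symm
    _ = Real.sqrt (P * P) := by rw [hPP]
    _ = P := Real.sqrt_mul_self hP0

/-- The product of the `k` largest singular values is submultiplicative. -/
theorem prodSval_submul (A B : Matrix (Fin d) (Fin d) ℝ) {k : ℕ} (hk : k ≤ d) :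
    ∏ i ∈ Finset.range k, svalNat (A * B) i
      ≤ (∏ i ∈ Finset.range k, svalNat A i) * ∏ i ∈ Finset.range k, svalNat B i := by
  classical
  rw [← norm_compound (A * B) hk, ← norm_compound A hk, ← norm_compound B hk, compound_mul]
  exact Matrix.l2_opNorm_mul _ _

end PhiAux

end Spectral

/-- the singular value function is submultiplicative: φ^s(AB) ≤ φ^s(A)·φ^s(B). -/
theorem phi_submultiplicative
    {d : ℕ} (A B : Matrix (Fin d) (Fin d) ℝ) (s : ℝ) (hs : 0 ≤ s) :
    phi s (A * B) ≤ phi s A * phi s B := by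
  classical
  unfold phi
  by_cases hsd : s ≤ (d : ℝ)
  · rw [if_pos hsd, if_pos hsd, if_pos hsd]
    set k : ℕ := ⌊s⌋₊ with hk
    have hkd : k ≤ d := by
      have h1 : (k : ℝ) ≤ s := Nat.floor_le hs
      exact_mod_cast h1.trans hsd
    by_cases hint : (k : ℝ) = s
    · -- s is a natural number
      have hz : s - (k : ℝ) = 0 := by rw [hint]; ring
      rw [hz]
      simp only [Real.rpow_zero, mul_one]
      exact PhiAux.prodSval_submul A B hkd
    · -- s is not an integer
      have hlt : (k : ℝ) < s := lt_of_le_of_ne (Nat.floor_le hs) hint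
      have hlt1 : s < (k : ℝ) + 1 := by exact_mod_cast Nat.lt_floor_add_one s
      set θ : ℝ := s - (k : ℝ) with hθ
      have hθ0 : 0 < θ := by simp only [hθ]; linarith
      have hθ1 : θ < 1 := by simp only [hθ]; linarith
      have hceil : ⌈s⌉₊ = k + 1 := by
        rw [Nat.ceil_eq_iff (Nat.succ_ne_zero k)]
        constructor
        · exact_mod_cast hlt
        · exact_mod_cast hlt1.le
      have hk1d : k + 1 ≤ d := by
        rw [← hceil]
        exact Nat.ceil_le.mpr hsd
      rw [hceil, Nat.add_sub_cancel]
      have key : ∀ M : Matrix (Fin d) (Fin d) ℝ,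
          (∏ i ∈ Finset.range k, svalNat M i) * (svalNat M k) ^ θ
            = (∏ i ∈ Finset.range k, svalNat M i) ^ (1 - θ)
              * (∏ i ∈ Finset.range (k + 1), svalNat M i) ^ θ := by
        intro M
        have hx := PhiAux.prodSval_nonneg M k
        rw [Finset.prod_range_succ,
          Real.mul_rpow hx (PhiAux.svalNat_nonneg M k), ← mul_assoc,
          ← Real.rpow_add' hx (by norm_num : (1 - θ) + θ ≠ 0)]
        norm_num
      calc (∏ i ∈ Finset.range k, svalNat (A * B) i) * (svalNat (A * B) k) ^ θ
          = (∏ i ∈ Finset.range k, svalNat (A * B) i) ^ (1 - θ)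
            * (∏ i ∈ Finset.range (k + 1), svalNat (A * B) i) ^ θ := key (A * B)
        _ ≤ ((∏ i ∈ Finset.range k, svalNat A i) * ∏ i ∈ Finset.range k, svalNat B i) ^ (1 - θ)
            * ((∏ i ∈ Finset.range (k + 1), svalNat A i)
              * ∏ i ∈ Finset.range (k + 1), svalNat B i) ^ θ := by
            apply mul_le_mul
            · exact Real.rpow_le_rpow (PhiAux.prodSval_nonneg _ _)
                (PhiAux.prodSval_submul A B hkd) (by linarith)
            · exact Real.rpow_le_rpow (PhiAux.prodSval_nonneg _ _)
                (PhiAux.prodSval_submul A B hk1d) hθ0.le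
            · exact Real.rpow_nonneg (PhiAux.prodSval_nonneg _ _) _
            · exact Real.rpow_nonneg
                (mul_nonneg (PhiAux.prodSval_nonneg _ _) (PhiAux.prodSval_nonneg _ _)) _
        _ = ((∏ i ∈ Finset.range k, svalNat A i) * (svalNat A k) ^ θ)
            * ((∏ i ∈ Finset.range k, svalNat B i) * (svalNat B k) ^ θ) := by
            rw [key A, key B,
              Real.mul_rpow (PhiAux.prodSval_nonneg A k) (PhiAux.prodSval_nonneg B k),
              Real.mul_rpow (PhiAux.prodSval_nonneg A (k + 1)) (PhiAux.prodSval_nonneg B (k + 1))]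
            ring
  · rw [if_neg hsd, if_neg hsd, if_neg hsd]
    have hdet : |(A * B).det| = |A.det| * |B.det| := by
      rw [Matrix.det_mul, abs_mul]
    rw [hdet, Real.mul_rpow (abs_nonneg _) (abs_nonneg _)]
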